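/- Let S be a compact Hausdorff left-topological semigroup which is left simple, let G be a compact group, and ρ : S → G a surjective homomorphism whose kernel J (preimage of the identity) consists of idempotents and which is injective on each maximal subgroup. Then S is isomorphic as a semigroup to G × J, where J is a semigroup of idempotents. -/

import Mathlib

/-- A subgroup (as a subset) of the set `T` in a semigroup. -/
def IsSubgroupIn {M : Type*} [Mul M] (T G : Set M) : Prop :=
  G ⊆ T ∧ G.Nonempty ∧ (∀ a ∈ G, ∀ b ∈ G, a * b ∈ G) ∧
    ∃ e ∈ G, (∀ g ∈ G, e * g = g ∧ g * e = g) ∧ ∀ g ∈ G, ∃ h ∈ G, g * h = e ∧ h * g = e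

/-- A maximal subgroup of the set `T` in a semigroup. -/
def IsMaxSubgroupIn {M : Type*} [Mul M] (T G : Set M) : Prop :=
  IsSubgroupIn T G ∧ ∀ G' : Set M, IsSubgroupIn T G' → G ⊆ G' → G' = G

section Aux
variable {S : Type*} [Semigroup S]

/-- In a left-simple semigroup, every idempotent is a right identity. -/
lemma aux_rid (hls : ∀ s : S, Set.range (fun x : S => x * s) = Set.univ)
    {f : S} (hf : f * f = f) (s : S) : s * f = s := by
  have hm : s ∈ Set.range (fun x : S => x * f) := by rw [hls f]; trivial
  obtain ⟨t, ht⟩ := hm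
  simp only at ht
  calc s * f = t * f * f := by rw [ht]
    _ = t * (f * f) := mul_assoc ..
    _ = s := by rw [hf, ht]

/-- Inverses in the subgroup `{x | j * x = x}`. -/
lemma aux_inv (hls : ∀ s : S, Set.range (fun x : S => x * s) = Set.univ)
    {j x : S} (hj : j * j = j) (hx : j * x = x) :
    ∃ h : S, j * h = h ∧ x * h = j ∧ h * x = j := by
  obtain ⟨t, ht⟩ : ∃ t, t * x = j := by
    have hm : j ∈ Set.range (fun y : S => y * x) := by rw [hls x]; trivial
    exact hm
  refine ⟨j * t, ?_, ?_, ?_⟩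
  · calc j * (j * t) = j * j * t := (mul_assoc ..).symm
      _ = j * t := by rw [hj]
  · -- x * (j*t) = j
    have hh : j * (j * t) = j * t := by
      calc j * (j * t) = j * j * t := (mul_assoc ..).symm
        _ = j * t := by rw [hj]
    have hhx : (j * t) * x = j := by
      calc (j * t) * x = j * (t * x) := mul_assoc ..
        _ = j * j := by rw [ht]
        _ = j := hj
    -- find left inverse of h := j*t
    obtain ⟨t₂, ht₂⟩ : ∃ t₂, t₂ * (j * t) = j := by
      have hm : j ∈ Set.range (fun y : S => y * (j * t)) := by rw [hls (j * t)]; trivial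
      exact hm
    have h₂ : (j * t₂) * (j * t) = j := by
      calc (j * t₂) * (j * t) = j * (t₂ * (j * t)) := mul_assoc ..
        _ = j * j := by rw [ht₂]
        _ = j := hj
    calc x * (j * t) = (j * x) * (j * t) := by rw [hx]
      _ = ((j * t₂) * (j * t)) * x * (j * t) := by rw [h₂]
      _ = (j * t₂) * ((j * t) * x) * (j * t) := by rw [mul_assoc (j*t₂)]
      _ = (j * t₂) * j * (j * t) := by rw [hhx]
      _ = (j * t₂) * (j * (j * t)) := by rw [mul_assoc]
      _ = (j * t₂) * (j * t) := by rw [hh]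
      _ = j := h₂
  · calc (j * t) * x = j * (t * x) := mul_assoc ..
      _ = j * j := by rw [ht]
      _ = j := hj

/-- Every element has an idempotent left identity. -/
lemma aux_ex (hls : ∀ s : S, Set.range (fun x : S => x * s) = Set.univ)
    {j0 : S} (hj0 : j0 * j0 = j0) (s : S) :
    ∃ j : S, j * j = j ∧ j * s = s := by
  set y := j0 * s with hy
  have hjy : j0 * y = y := by
    calc j0 * (j0 * s) = j0 * j0 * s := (mul_assoc ..).symm
      _ = j0 * s := by rw [hj0]
  obtain ⟨u, hu1, hu2, hu3⟩ := aux_inv hls hj0 hjy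
  have hus : u * s = j0 := by
    have huj : u * j0 = u := aux_rid hls hj0 u
    calc u * s = (u * j0) * s := by rw [huj]
      _ = u * (j0 * s) := mul_assoc ..
      _ = j0 := hu3
  refine ⟨s * u, ?_, ?_⟩
  · calc (s * u) * (s * u) = s * (u * (s * u)) := mul_assoc ..
      _ = s * ((u * s) * u) := by rw [mul_assoc u s u]
      _ = s * (j0 * u) := by rw [hus]
      _ = s * u := by rw [hu1]
  · calc (s * u) * s = s * (u * s) := mul_assoc ..
      _ = s * j0 := by rw [hus]
      _ = s := aux_rid hls hj0 s

/-- The idempotent left identity of an element is unique. -/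
lemma aux_uniq (hls : ∀ s : S, Set.range (fun x : S => x * s) = Set.univ)
    {j j' s : S} (hj : j * j = j) (hj' : j' * j' = j') (hjs : j * s = s)
    (hj's : j' * s = s) : j = j' := by
  obtain ⟨v, hv1, hv2, hv3⟩ := aux_inv hls hj' hj's
  calc j = j * j' := (aux_rid hls hj' j).symm
    _ = j * (s * v) := by rw [hv2]
    _ = (j * s) * v := (mul_assoc ..).symm
    _ = s * v := by rw [hjs]
    _ = j' := hv2

/-- `{x | j * x = x}` is a maximal subgroup. -/
lemma aux_max (hls : ∀ s : S, Set.range (fun x : S => x * s) = Set.univ)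
    {j : S} (hj : j * j = j) :
    IsMaxSubgroupIn Set.univ {x : S | j * x = x} := by
  constructor
  · refine ⟨Set.subset_univ _, ⟨j, hj⟩, ?_, j, hj, ?_, ?_⟩
    · intro a ha b hb
      show j * (a * b) = a * b
      calc j * (a * b) = (j * a) * b := (mul_assoc ..).symm
        _ = a * b := by rw [ha]
    · intro g hg
      exact ⟨hg, aux_rid hls hj g⟩
    · intro g hg
      obtain ⟨h, h1, h2, h3⟩ := aux_inv hls hj hg
      exact ⟨h, h1, h2, h3⟩
  · intro G' hG' hsub
    obtain ⟨-, -, -, e', he'G, he'id, -⟩ := hG'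
    have hje : j ∈ G' := hsub hj
    have h1 : e' * j = j := (he'id j hje).1
    have h2 : e' * j = e' := aux_rid hls hj e'
    have hej : e' = j := by rw [← h2, h1]
    apply Set.Subset.antisymm _ hsub
    intro g hg
    show j * g = g
    rw [← hej]
    exact (he'id g hg).1
end Aux

/-- Let `S` be a compact Hausdorff left-topological semigroup which is
left simple (`S·s = S` for all `s`), `G` a compact group, and `ρ : S → G` a surjective
semigroup homomorphism whose kernel `J = ρ⁻¹(1)` consists of idempotents and which is
injective on each maximal subgroup. Then `J` is a subsemigroup of idempotents (a band),
and `S` is isomorphic as a semigroup to `G × J` (with coordinatewise multiplication,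
the `J`-coordinate multiplying via the semigroup operation of `S`). -/
theorem stmt14 {S G : Type*} [Semigroup S] [TopologicalSpace S] [CompactSpace S] [T2Space S]
    [Group G] [TopologicalSpace G] [IsTopologicalGroup G] [CompactSpace G] [T2Space G]
    (hc : ∀ a : S, Continuous fun x : S => x * a)
    (hls : ∀ s : S, Set.range (fun x : S => x * s) = Set.univ)
    (ρ : S → G) (hρs : Function.Surjective ρ)
    (hρm : ∀ a b : S, ρ (a * b) = ρ a * ρ b)
    (hker : ∀ j ∈ ρ ⁻¹' ({1} : Set G), j * j = j)
    (hinj : ∀ H : Set S, IsMaxSubgroupIn Set.univ H → Set.InjOn ρ H) :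
    (∀ j ∈ ρ ⁻¹' ({1} : Set G), ∀ j' ∈ ρ ⁻¹' ({1} : Set G), j * j' ∈ ρ ⁻¹' ({1} : Set G)) ∧
      ∃ φ : S ≃ G × (ρ ⁻¹' ({1} : Set G) : Set S), ∀ s t : S,
        (φ (s * t)).1 = (φ s).1 * (φ t).1 ∧
        ((φ (s * t)).2 : S) = ((φ s).2 : S) * ((φ t).2 : S) := by
  have hρ_idem : ∀ f : S, f * f = f → ρ f = 1 := by
    intro f hf
    have h := hρm f f
    rw [hf] at h
    exact left_eq_mul.mp h
  refine ⟨?_, ?_⟩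
  · intro j hj j' hj'
    simp only [Set.mem_preimage, Set.mem_singleton_iff] at *
    rw [hρm, hj, hj', one_mul]
  · -- base idempotent
    obtain ⟨j0, hj0ρ⟩ := hρs 1
    have hj0 : j0 * j0 = j0 := hker j0 (by simp [hj0ρ])
    -- idempotent left identity function
    have hP : ∀ s : S, ∃ j : S, j * j = j ∧ j * s = s := fun s => aux_ex hls hj0 s
    set e : S → S := fun s => (hP s).choose with he
    have he1 : ∀ s, e s * e s = e s := fun s => (hP s).choose_spec.1
    have he2 : ∀ s, e s * s = s := fun s => (hP s).choose_spec.2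
    have heJ : ∀ s, e s ∈ ρ ⁻¹' ({1} : Set G) := fun s => by
      simp only [Set.mem_preimage, Set.mem_singleton_iff]
      exact hρ_idem _ (he1 s)
    set φ0 : S → G × (ρ ⁻¹' ({1} : Set G) : Set S) := fun s => (ρ s, ⟨e s, heJ s⟩) with hφ0
    have hbij : Function.Bijective φ0 := by
      constructor
      · intro s t hst
        have h1 : ρ s = ρ t := congrArg Prod.fst hst
        have h2 : e s = e t := congrArg (fun p => (p.2 : S)) hst
        refine hinj _ (aux_max hls (he1 s)) ?_ ?_ h1
        · exact he2 s
        · show e s * t = t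
          rw [h2]; exact he2 t
      · rintro ⟨g, j, hj⟩
        have hjI : j * j = j := hker j hj
        have hjρ : ρ j = 1 := hj
        obtain ⟨x, hx⟩ := hρs g
        refine ⟨j * x, ?_⟩
        have hjx : j * (j * x) = j * x := by
          calc j * (j * x) = j * j * x := (mul_assoc ..).symm
            _ = j * x := by rw [hjI]
        have hej : e (j * x) = j := aux_uniq hls (he1 _) hjI (he2 _) hjx
        have : ρ (j * x) = g := by rw [hρm, hjρ, one_mul, hx]
        exact Prod.ext this (Subtype.ext hej)
    refine ⟨Equiv.ofBijective φ0 hbij, ?_⟩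
    intro s t
    have hcoe : ∀ u : S, Equiv.ofBijective φ0 hbij u = φ0 u := fun u => rfl
    constructor
    · simp only [hcoe, hφ0]
      exact hρm s t
    · simp only [hcoe, hφ0]
      show e (s * t) = e s * e t
      have h1 : e s * (s * t) = s * t := by
        calc e s * (s * t) = (e s * s) * t := (mul_assoc ..).symm
          _ = s * t := by rw [he2 s]
      have h2 : e (s * t) = e s := aux_uniq hls (he1 _) (he1 s) (he2 _) h1
      rw [h2, aux_rid hls (he1 t) (e s)]
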